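/- There exists a Cantor set Q ⊂ [−1, 1] containing 0, obtained as [−1,1] minus a countable union of disjoint open intervals I_k (k ≥ 1), such that for every k, if x_k denotes the midpoint of I_k, then the length |I_k| ≤ (d(0, x_k))^2, where d is the Euclidean distance. -/

import Mathlib

open Set

namespace Stmt13Aux

noncomputable section

/-- binary level of `k` -/
def mm (k : ℕ) : ℕ := Nat.log 2 (k + 1)
/-- offset within level -/
def tt (k : ℕ) : ℕ := k + 1 - 2 ^ mm k
/-- a dense injective sequence in `(0, 1/2)` -/
def r (k : ℕ) : ℝ := (2 * tt k + 1) / 2 ^ (mm k + 2)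
/-- dense injective sequence in `(0,1) \ {1/2}`, symmetric under `x ↦ 1 - x` -/
def e (n : ℕ) : ℝ := if n % 2 = 0 then r (n / 2) else 1 - r (n / 2)
/-- gap lengths -/
def l (n : ℕ) : ℝ := (e n - 1/2) ^ 2 * (1/2 : ℝ) ^ (n / 2 + 2)
/-- dominating sequence -/
def u (n : ℕ) : ℝ := (1/2 : ℝ) ^ (n / 2 + 2)
/-- total gap length -/
def S : ℝ := ∑' n, l n
/-- slope -/
def lam : ℝ := 2 - S
/-- sum of gaps strictly to the left of parameter `c` -/
def G (c : ℝ) : ℝ := ∑' m, if e m < c then l m else 0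
/-- left endpoints of gaps -/
def aa (n : ℕ) : ℝ := -1 + lam * e n + G (e n)
/-- right endpoints of gaps -/
def bb (n : ℕ) : ℝ := aa n + l n
/-- the inverse Cantor function -/
def FF (t : ℝ) : ℝ := -1 + lam * t + ∑' m, if e m ≤ t then l m else 0
/-- the Cantor set -/
def QQ : Set ℝ := Icc (-1 : ℝ) 1 \ ⋃ n, Ioo (aa n) (bb n)

lemma pow_mm_le (k : ℕ) : 2 ^ mm k ≤ k + 1 := Nat.pow_log_le_self 2 k.succ_ne_zero

lemma lt_pow_mm_succ (k : ℕ) : k + 1 < 2 ^ (mm k + 1) := Nat.lt_pow_succ_log_self one_lt_two _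

lemma tt_lt (k : ℕ) : tt k < 2 ^ mm k := by
  have h1 := pow_mm_le k
  have h2 := lt_pow_mm_succ k
  have h3 : 2 ^ (mm k + 1) = 2 * 2 ^ mm k := by rw [pow_succ]; ring
  unfold tt; omega

lemma key_eq (k : ℕ) : 2 ^ mm k + tt k = k + 1 := by
  have := pow_mm_le k; unfold tt; omega

lemma r_pos (k : ℕ) : 0 < r k := by
  unfold r; positivity

lemma r_lt_half (k : ℕ) : r k < 1/2 := by
  unfold r
  rw [div_lt_iff₀ (by positivity)]
  have h := tt_lt k
  have : (tt k : ℝ) + 1 ≤ 2 ^ mm k := by exact_mod_cast Nat.succ_le_of_lt h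
  have hp : (2:ℝ) ^ (mm k + 2) = 4 * 2 ^ mm k := by ring
  nlinarith [this]

lemma r_eval (m t : ℕ) (ht : t < 2 ^ m) :
    r (2 ^ m + t - 1) = (2 * t + 1) / 2 ^ (m + 2) := by
  have h1 : 1 ≤ 2 ^ m := Nat.one_le_two_pow
  have hk1 : (2 ^ m + t - 1) + 1 = 2 ^ m + t := by omega
  have hmm : mm (2 ^ m + t - 1) = m := by
    unfold mm; rw [hk1]
    apply Nat.log_eq_of_pow_le_of_lt_pow
    · omega
    · have h3 : 2 ^ (m + 1) = 2 * 2 ^ m := by rw [pow_succ]; ring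
      omega
  have htt : tt (2 ^ m + t - 1) = t := by
    unfold tt; rw [hk1, hmm]; omega
  unfold r; rw [hmm, htt]

lemma r_inj : Function.Injective r := by
  intro j k h
  unfold r at h
  have hj : ((2 * tt j + 1 : ℕ) : ℝ) * 2 ^ (mm k + 2) = ((2 * tt k + 1 : ℕ) : ℝ) * 2 ^ (mm j + 2) := by
    field_simp at h
    push_cast
    push_cast at h
    linarith
  have hnat : (2 * tt j + 1) * 2 ^ (mm k + 2) = (2 * tt k + 1) * 2 ^ (mm j + 2) := by
    exact_mod_cast hj
  -- 2-adic valuation: mm j = mm k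
  have hm : mm j = mm k := by
    rcases Nat.le_total (mm j) (mm k) with hle | hle
    · by_contra hne
      have : mm j + 1 ≤ mm k := by omega
      have h2 : 2 ^ (mm j + 2) * 2 ∣ 2 ^ (mm k + 2) := by
        rw [← pow_succ]
        exact pow_dvd_pow 2 (by omega)
      rcases h2 with ⟨c, hc⟩
      rw [hc] at hnat
      have : (2 * tt j + 1) * (2 ^ (mm j + 2) * 2 * c) = (2 * tt k + 1) * 2 ^ (mm j + 2) := hnat
      have h3 : 2 * ((2 * tt j + 1) * c) = 2 * tt k + 1 := by
        have hpos : 0 < 2 ^ (mm j + 2) := by positivity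
        apply Nat.eq_of_mul_eq_mul_left hpos
        ring_nf
        ring_nf at this
        omega
      omega
    · by_contra hne
      have : mm k + 1 ≤ mm j := by omega
      have h2 : 2 ^ (mm k + 2) * 2 ∣ 2 ^ (mm j + 2) := by
        rw [← pow_succ]
        exact pow_dvd_pow 2 (by omega)
      rcases h2 with ⟨c, hc⟩
      rw [hc] at hnat
      have h3 : 2 * ((2 * tt k + 1) * c) = 2 * tt j + 1 := by
        have hpos : 0 < 2 ^ (mm k + 2) := by positivity
        apply Nat.eq_of_mul_eq_mul_left hpos
        ring_nf
        ring_nf at hnat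
        omega
      omega
  have ht : tt j = tt k := by
    rw [hm] at hnat
    have := Nat.eq_of_mul_eq_mul_right (show 0 < 2 ^ (mm k + 2) by positivity) hnat
    omega
  have e1 := key_eq j
  have e2 := key_eq k
  rw [hm, ht] at e1
  omega

lemma r_dense {α β : ℝ} (hα : 0 ≤ α) (hβ : β ≤ 1/2) (hαβ : α < β) :
    ∃ k, α < r k ∧ r k < β := by
  obtain ⟨m, hm⟩ : ∃ m : ℕ, (1/2:ℝ) ^ m < β - α := exists_pow_lt_of_lt_one (by linarith) (by norm_num)
  set t : ℕ := ⌊α * 2 ^ (m + 1)⌋₊ + 1 with htdef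
  have hpow : (0:ℝ) < 2 ^ (m+1) := by positivity
  have hfl : (⌊α * 2 ^ (m + 1)⌋₊ : ℝ) ≤ α * 2 ^ (m+1) := Nat.floor_le (by positivity)
  have hfl2 : α * 2 ^ (m+1) < ⌊α * 2 ^ (m + 1)⌋₊ + 1 := Nat.lt_floor_add_one _
  have hval : α < (2 * t + 1) / 2 ^ (m + 2) := by
    rw [lt_div_iff₀ (by positivity)]
    have hc : (t:ℝ) = (⌊α * 2 ^ (m + 1)⌋₊ : ℝ) + 1 := by rw [htdef]; push_cast; ring
    have hp : (2:ℝ) ^ (m+2) = 2 * 2 ^ (m+1) := by ring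
    nlinarith
  have hval2 : (2 * t + 1 : ℝ) / 2 ^ (m + 2) < β := by
    rw [div_lt_iff₀ (by positivity)]
    have ht' : (t:ℝ) ≤ α * 2 ^ (m+1) + 1 := by
      have hc : (t:ℝ) = (⌊α * 2 ^ (m + 1)⌋₊ : ℝ) + 1 := by rw [htdef]; push_cast; ring
      linarith
    have hp : (2:ℝ) ^ (m+2) = 2 * 2 ^ (m+1) := by ring
    have hm' : (1/2:ℝ)^m * 2 ^ (m+1) = 2 := by
      rw [div_pow, one_pow]
      field_simp
      ring
    nlinarith [hm, hpow]
  have htlt : t < 2 ^ m := by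
    by_contra hge
    push_neg at hge
    have : (2:ℝ)^m ≤ (t:ℝ) := by exact_mod_cast hge
    have hb : (2 * t + 1 : ℝ) / 2 ^ (m + 2) < 1/2 := lt_of_lt_of_le hval2 hβ
    rw [div_lt_iff₀ (by positivity)] at hb
    have hp : (2:ℝ) ^ (m+2) = 4 * 2 ^ m := by ring
    nlinarith
  refine ⟨2 ^ m + t - 1, ?_, ?_⟩ <;> rw [r_eval m t htlt] <;>
    [exact hval; exact hval2] 

lemma e_even (k : ℕ) : e (2 * k) = r k := by
  unfold e
  have h1 : (2 * k) % 2 = 0 := by omega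
  have h2 : (2 * k) / 2 = k := by omega
  rw [if_pos h1, h2]

lemma e_odd (k : ℕ) : e (2 * k + 1) = 1 - r k := by
  unfold e
  have h1 : ¬ ((2 * k + 1) % 2 = 0) := by omega
  have h2 : (2 * k + 1) / 2 = k := by omega
  rw [if_neg h1, h2]

lemma e_pos (n : ℕ) : 0 < e n := by
  unfold e
  split
  · exact r_pos _
  · have := r_lt_half (n / 2); linarith

lemma e_lt_one (n : ℕ) : e n < 1 := by
  unfold e
  split
  · have := r_lt_half (n / 2); linarith
  · have := r_pos (n / 2); linarith

lemma e_ne_half (n : ℕ) : e n ≠ 1/2 := by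
  unfold e
  split
  · have := r_lt_half (n / 2); linarith
  · have := r_lt_half (n / 2); intro h; linarith [h]

lemma e_lt_half_even (n : ℕ) (h : n % 2 = 0) : e n < 1/2 := by
  unfold e; rw [if_pos h]; exact r_lt_half _

lemma e_gt_half_odd (n : ℕ) (h : n % 2 ≠ 0) : 1/2 < e n := by
  unfold e; rw [if_neg h]; have := r_lt_half (n / 2); linarith

lemma e_inj : Function.Injective e := by
  intro j k h
  unfold e at h
  by_cases hj : j % 2 = 0 <;> by_cases hk : k % 2 = 0
  · rw [if_pos hj, if_pos hk] at h
    have := r_inj h; omega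
  · rw [if_pos hj, if_neg hk] at h
    have h1 := r_lt_half (j / 2); have h2 := r_lt_half (k / 2); linarith
  · rw [if_neg hj, if_pos hk] at h
    have h1 := r_lt_half (j / 2); have h2 := r_lt_half (k / 2); linarith
  · rw [if_neg hj, if_neg hk] at h
    have : r (j / 2) = r (k / 2) := by linarith
    have := r_inj this; omega

lemma u_pos (n : ℕ) : 0 < u n := by unfold u; positivity

lemma l_pos (n : ℕ) : 0 < l n := by
  unfold l
  have h := e_ne_half n
  have : e n - 1/2 ≠ 0 := fun hc => h (by linarith)
  positivity

lemma l_le_quarter_u (n : ℕ) : l n ≤ (1/4) * u n := by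
  unfold l u
  have h1 := e_pos n
  have h2 := e_lt_one n
  have h3 : (e n - 1/2)^2 ≤ 1/4 := by nlinarith
  have h4 : (0:ℝ) < (1/2:ℝ) ^ (n / 2 + 2) := by positivity
  nlinarith

lemma l_le_sq (n : ℕ) : l n ≤ (e n - 1/2)^2 := by
  unfold l
  have h4 : ((1/2:ℝ)) ^ (n / 2 + 2) ≤ 1 := by
    apply pow_le_one₀ <;> norm_num
  nlinarith [sq_nonneg (e n - 1/2), h4, pow_pos (show (0:ℝ) < 1/2 by norm_num) (n/2+2)]

lemma u_succ_succ (N : ℕ) : u N = 2 * u (N + 2) := by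
  unfold u
  have : (N + 2) / 2 = N / 2 + 1 := by omega
  rw [this, pow_succ]
  ring

lemma sum_range_u (N : ℕ) : ∑ n ∈ Finset.range N, u n = 1 - 2 * u N - 2 * u (N + 1) := by
  induction N with
  | zero => unfold u; norm_num
  | succ N ih =>
    rw [Finset.sum_range_succ, ih]
    have := u_succ_succ N
    have h2 : N + 1 + 1 = N + 2 := rfl
    rw [h2]
    linarith

lemma summable_u : Summable u := by
  apply summable_of_sum_range_le (c := 1) (fun n => (u_pos n).le)
  intro N
  rw [sum_range_u]
  have := u_pos N
  have := u_pos (N + 1)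
  linarith

lemma tsum_u_le : ∑' n, u n ≤ 1 := by
  apply Real.tsum_le_of_sum_range_le (fun n => (u_pos n).le)
  intro N
  rw [sum_range_u]
  have := u_pos N
  have := u_pos (N + 1)
  linarith

lemma summable_l : Summable l :=
  Summable.of_nonneg_of_le (fun n => (l_pos n).le)
    (fun n => le_trans (l_le_quarter_u n) (by have := u_pos n; linarith))
    summable_u

lemma summable_ite (P : ℕ → Prop) [DecidablePred P] :
    Summable (fun m => if P m then l m else 0) := by
  apply Summable.of_nonneg_of_le (fun n => ?_) (fun n => ?_) summable_l
  · split <;> [exact (l_pos n).le; rfl]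
  · split <;> [rfl; exact (l_pos n).le]

lemma tsum_ite_nonneg (P : ℕ → Prop) [DecidablePred P] :
    0 ≤ ∑' m, if P m then l m else 0 := by
  apply tsum_nonneg
  intro n; split <;> [exact (l_pos n).le; rfl]

lemma tsum_ite_mono (P Q : ℕ → Prop) [DecidablePred P] [DecidablePred Q]
    (h : ∀ m, P m → Q m) :
    (∑' m, if P m then l m else 0) ≤ ∑' m, if Q m then l m else 0 := by
  apply Summable.tsum_le_tsum _ (summable_ite P) (summable_ite Q)
  intro m
  by_cases hm : P m
  · rw [if_pos hm, if_pos (h m hm)]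
  · rw [if_neg hm]; split <;> [exact (l_pos m).le; rfl]

lemma tsum_ite_le (P : ℕ → Prop) [DecidablePred P] :
    (∑' m, if P m then l m else 0) ≤ S := by
  apply Summable.tsum_le_tsum _ (summable_ite P) summable_l
  intro m; split <;> [rfl; exact (l_pos m).le]

lemma S_nonneg : 0 ≤ S := tsum_nonneg (fun n => (l_pos n).le)

lemma S_le : S ≤ 1/4 := by
  have h1 : S ≤ ∑' n, (1/4) * u n :=
    Summable.tsum_le_tsum l_le_quarter_u summable_l (summable_u.mul_left _)
  have h2 : ∑' n, (1/4 : ℝ) * u n = (1/4) * ∑' n, u n := tsum_mul_left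
  have := tsum_u_le
  nlinarith [h1, h2, this]

lemma lam_ge : (1:ℝ) ≤ lam := by unfold lam; have := S_le; linarith

lemma lam_pos : (0:ℝ) < lam := lt_of_lt_of_le one_pos lam_ge

lemma summable_two_mul : Summable (fun k => l (2 * k)) :=
  summable_l.comp_injective (fun a b h => by omega)

lemma summable_two_mul_add_one : Summable (fun k => l (2 * k + 1)) :=
  summable_l.comp_injective (fun a b h => by omega)

lemma l_odd_eq (k : ℕ) : l (2 * k + 1) = l (2 * k) := by
  unfold l
  rw [e_odd, e_even]
  have h1 : (2 * k + 1) / 2 = k := by omega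
  have h2 : (2 * k) / 2 = k := by omega
  rw [h1, h2]
  ring_nf

lemma half_sum : (∑' m, if e m < 1/2 then l m else 0) = S / 2 := by
  set g : ℕ → ℝ := fun m => if e m < 1/2 then l m else 0 with hg
  have hge : ∀ k, g (2 * k) = l (2 * k) := by
    intro k
    have : e (2 * k) < 1/2 := e_lt_half_even _ (by omega)
    simp only [hg, if_pos this]
  have hgo : ∀ k, g (2 * k + 1) = 0 := by
    intro k
    have : ¬ (e (2 * k + 1) < 1/2) := not_lt.2 (le_of_lt (e_gt_half_odd _ (by omega)))
    simp only [hg, if_neg this]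
  have hsg : Summable g := summable_ite _
  have h1 : (∑' k, g (2 * k)) + (∑' k, g (2 * k + 1)) = ∑' n, g n :=
    tsum_even_add_odd (by simpa [hge] using summable_two_mul)
      (by simp only [hgo]; exact summable_zero)
  have h2 : (∑' k, l (2 * k)) + (∑' k, l (2 * k + 1)) = ∑' n, l n :=
    tsum_even_add_odd summable_two_mul summable_two_mul_add_one
  have h3 : (∑' k, l (2 * k + 1)) = ∑' k, l (2 * k) := by
    apply tsum_congr; intro k; exact l_odd_eq k
  have h4 : (∑' k, g (2 * k)) = ∑' k, l (2 * k) := tsum_congr hge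
  have h5 : (∑' k, g (2 * k + 1)) = 0 := by simp [hgo]
  have : ∑' n, g n = ∑' k, l (2 * k) := by rw [← h1, h4, h5]; ring
  rw [this]
  unfold S
  rw [← h2, h3]
  ring

lemma G_nonneg (c : ℝ) : 0 ≤ G c := tsum_ite_nonneg _

lemma G_mono {c d : ℝ} (h : c ≤ d) : G c ≤ G d :=
  tsum_ite_mono _ _ (fun m hm => lt_of_lt_of_le hm h)

lemma atom_sum (n : ℕ) : (∑' m, if e m = e n then l m else 0) = l n := by
  have h : (fun m => if e m = e n then l m else 0) = fun m => if m = n then l n else 0 := by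
    funext m
    by_cases hm : m = n
    · subst hm; simp
    · have : e m ≠ e n := fun hc => hm (e_inj hc)
      rw [if_neg this, if_neg hm]
  rw [h]
  exact tsum_ite_eq n (fun _ => l n)

lemma le_sum_eq (n : ℕ) : (∑' m, if e m ≤ e n then l m else 0) = G (e n) + l n := by
  have h : (fun m => if e m ≤ e n then l m else 0) =
      fun m => (if e m < e n then l m else 0) + (if e m = e n then l m else 0) := by
    funext m
    rcases lt_trichotomy (e m) (e n) with h1 | h1 | h1
    · rw [if_pos h1.le, if_pos h1, if_neg h1.ne]; ring
    · rw [if_pos h1.le, if_neg (by rw [h1]; exact lt_irrefl _), if_pos h1]; ring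
    · rw [if_neg (not_le.2 h1), if_neg (not_lt.2 h1.le), if_neg h1.ne']; ring
  rw [h, Summable.tsum_add (summable_ite _) (summable_ite _), atom_sum]
  rfl

lemma bb_eq_FF (n : ℕ) : bb n = FF (e n) := by
  unfold bb aa FF
  rw [le_sum_eq]
  ring

lemma FF_mono {s t : ℝ} (h : s ≤ t) : FF s ≤ FF t := by
  unfold FF
  have h1 : lam * s ≤ lam * t := mul_le_mul_of_nonneg_left h lam_pos.le
  have h2 := tsum_ite_mono (fun m => e m ≤ s) (fun m => e m ≤ t) (fun m hm => le_trans hm h)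
  linarith

lemma FF_one : FF 1 = 1 := by
  unfold FF
  have h : (fun m => if e m ≤ (1:ℝ) then l m else 0) = l := by
    funext m
    rw [if_pos (e_lt_one m).le]
  rw [h]
  show -1 + lam * 1 + S = 1
  unfold lam; ring

lemma FF_le_aa {t : ℝ} {n : ℕ} (h : t < e n) : FF t ≤ aa n := by
  unfold FF aa
  have h1 : lam * t ≤ lam * e n := mul_le_mul_of_nonneg_left h.le lam_pos.le
  have h2 := tsum_ite_mono (fun m => e m ≤ t) (fun m => e m < e n)
    (fun m hm => lt_of_le_of_lt hm h)
  unfold G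
  linarith

lemma sep {n m : ℕ} (h : e n < e m) : bb n + lam * (e m - e n) ≤ aa m := by
  have hkey : G (e n) + l n ≤ G (e m) := by
    have hpt : ∀ k, (if e k < e n then l k else 0) + (if k = n then l k else 0) ≤
        (if e k < e m then l k else 0) := by
      intro k
      by_cases hk : k = n
      · subst hk
        rw [if_neg (lt_irrefl _), if_pos rfl, if_pos h]
        linarith
      · rw [if_neg hk]
        by_cases hlt : e k < e n
        · rw [if_pos hlt, if_pos (hlt.trans h)]; linarith
        · rw [if_neg hlt]
          have : (0:ℝ) ≤ if e k < e m then l k else 0 := by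
            split <;> [exact (l_pos k).le; rfl]
          linarith
    have hsum := Summable.tsum_le_tsum hpt ((summable_ite _).add (summable_ite (fun k => k = n)))
      (summable_ite _)
    rw [Summable.tsum_add (summable_ite _) (summable_ite (fun k => k = n))] at hsum
    have : (∑' k, if k = n then l k else 0) = l n := by
      have hh : (fun k => if k = n then l k else 0) = fun k => if k = n then l n else 0 := by
        funext k; by_cases hk : k = n
        · subst hk; simp
        · rw [if_neg hk, if_neg hk]
      rw [hh]; exact tsum_ite_eq n (fun _ => l n)
    rw [this] at hsum
    exact hsum
  unfold bb aa
  nlinarith [hkey]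

lemma aa_gt (n : ℕ) : -1 < aa n := by
  unfold aa
  have := G_nonneg (e n)
  have := mul_pos lam_pos (e_pos n)
  linarith

lemma bb_lt (n : ℕ) : bb n < 1 := by
  rw [bb_eq_FF]
  unfold FF
  have h1 := tsum_ite_le (fun m => e m ≤ e n)
  have h2 : lam * e n < lam * 1 := by
    exact mul_lt_mul_of_pos_left (e_lt_one n) lam_pos
  have : -1 + lam * 1 + S = 1 := by unfold lam; ring
  linarith

lemma bb_neg {n : ℕ} (h : e n < 1/2) : bb n ≤ lam * (e n - 1/2) := by
  rw [bb_eq_FF]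
  unfold FF
  have h1 : (∑' m, if e m ≤ e n then l m else 0) ≤ ∑' m, if e m < 1/2 then l m else 0 :=
    tsum_ite_mono _ _ (fun m hm => lt_of_le_of_lt hm h)
  rw [half_sum] at h1
  have : -1 + lam * e n + S / 2 = lam * (e n - 1/2) := by unfold lam; ring
  linarith

lemma aa_pos {n : ℕ} (h : 1/2 < e n) : lam * (e n - 1/2) ≤ aa n := by
  unfold aa
  have h1 : (∑' m, if e m < 1/2 then l m else 0) ≤ G (e n) :=
    tsum_ite_mono _ _ (fun m hm => lt_of_lt_of_le hm (by linarith))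
  rw [half_sum] at h1
  have : -1 + lam * e n + S / 2 = lam * (e n - 1/2) := by unfold lam; ring
  linarith

lemma aa_lt_bb (n : ℕ) : aa n < bb n := by
  unfold bb; have := l_pos n; linarith

lemma aa_notin_gap (n m : ℕ) : aa n ∉ Ioo (aa m) (bb m) := by
  intro hin
  rcases hin with ⟨h1, h2⟩
  rcases eq_or_ne m n with rfl | hne
  · exact lt_irrefl _ h1
  · have hene : e m ≠ e n := fun hc => hne (e_inj hc)
    rcases hene.lt_or_gt with hlt | hlt
    · have := sep hlt
      have hp : 0 < lam * (e n - e m) := mul_pos lam_pos (by linarith)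
      linarith
    · have := sep hlt
      have hp : 0 < lam * (e m - e n) := mul_pos lam_pos (by linarith)
      have := aa_lt_bb n
      linarith

lemma bb_notin_gap (n m : ℕ) : bb n ∉ Ioo (aa m) (bb m) := by
  intro hin
  rcases hin with ⟨h1, h2⟩
  rcases eq_or_ne m n with rfl | hne
  · exact lt_irrefl _ h2
  · have hene : e m ≠ e n := fun hc => hne (e_inj hc)
    rcases hene.lt_or_gt with hlt | hlt
    · have := sep hlt
      have hp : 0 < lam * (e n - e m) := mul_pos lam_pos (by linarith)
      have := aa_lt_bb n
      linarith
    · have := sep hlt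
      have hp : 0 < lam * (e m - e n) := mul_pos lam_pos (by linarith)
      linarith

lemma aa_mem (n : ℕ) : aa n ∈ QQ := by
  refine ⟨⟨(aa_gt n).le, le_trans (aa_lt_bb n).le (bb_lt n).le⟩, ?_⟩
  intro hc
  rcases mem_iUnion.1 hc with ⟨m, hm⟩
  exact aa_notin_gap n m hm

lemma bb_mem (n : ℕ) : bb n ∈ QQ := by
  refine ⟨⟨le_trans (aa_gt n).le (aa_lt_bb n).le, (bb_lt n).le⟩, ?_⟩
  intro hc
  rcases mem_iUnion.1 hc with ⟨m, hm⟩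
  exact bb_notin_gap n m hm

lemma zero_mem : (0:ℝ) ∈ QQ := by
  refine ⟨⟨by norm_num, by norm_num⟩, ?_⟩
  intro hc
  rcases mem_iUnion.1 hc with ⟨n, h1, h2⟩
  rcases (e_ne_half n).lt_or_gt with h | h
  · have := bb_neg h
    have : lam * (e n - 1/2) < 0 := mul_neg_of_pos_of_neg lam_pos (by linarith)
    linarith [bb_neg h]
  · have := aa_pos h
    have : 0 < lam * (e n - 1/2) := mul_pos lam_pos (by linarith)
    linarith [aa_pos h]

lemma gap_bound (n : ℕ) : bb n - aa n ≤ (dist (0:ℝ) ((aa n + bb n) / 2)) ^ 2 := by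
  have hlen : bb n - aa n = l n := by unfold bb; ring
  rw [hlen, Real.dist_eq]
  have hl := lam_ge
  have hsq := l_le_sq n
  rcases (e_ne_half n).lt_or_gt with h | h
  · have hb := bb_neg h
    have hmid : (aa n + bb n) / 2 < bb n := by have := aa_lt_bb n; linarith
    have hb2 : bb n ≤ e n - 1/2 := by nlinarith [bb_neg h]
    have habs : |0 - (aa n + bb n) / 2| ≥ 1/2 - e n := by
      rw [abs_sub_comm, abs_of_nonpos (by linarith)]
      linarith
    calc l n ≤ (e n - 1/2)^2 := hsq
    _ ≤ |0 - (aa n + bb n)/2| ^ 2 := by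
        have h0 : (0:ℝ) ≤ 1/2 - e n := by linarith [e_pos n]
        have : (e n - 1/2)^2 = (1/2 - e n)^2 := by ring
        rw [this]
        apply pow_le_pow_left₀ h0 habs
  · have ha := aa_pos h
    have hmid : aa n < (aa n + bb n) / 2 := by have := aa_lt_bb n; linarith
    have ha2 : e n - 1/2 ≤ aa n := by nlinarith [aa_pos h]
    have habs : |0 - (aa n + bb n) / 2| ≥ e n - 1/2 := by
      rw [abs_sub_comm, abs_of_nonneg (by linarith)]
      linarith
    calc l n ≤ (e n - 1/2)^2 := hsq
    _ ≤ |0 - (aa n + bb n)/2| ^ 2 := by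
        have h0 : (0:ℝ) ≤ e n - 1/2 := by linarith
        apply pow_le_pow_left₀ h0 habs

lemma gaps_disjoint : Pairwise fun i j => Disjoint (Ioo (aa i) (bb i)) (Ioo (aa j) (bb j)) := by
  intro i j hij
  have hene : e i ≠ e j := fun hc => hij (e_inj hc)
  rw [Set.disjoint_iff]
  rintro x ⟨⟨h1, h2⟩, ⟨h3, h4⟩⟩
  rcases hene.lt_or_gt with hlt | hlt
  · have := sep hlt
    have hp : 0 < lam * (e j - e i) := mul_pos lam_pos (by linarith)
    linarith
  · have := sep hlt
    have hp : 0 < lam * (e i - e j) := mul_pos lam_pos (by linarith)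
    linarith

lemma QQ_closed : IsClosed QQ :=
  IsClosed.sdiff isClosed_Icc (isOpen_iUnion fun n => isOpen_Ioo)

lemma side_right {x ε : ℝ} (hx : x ∈ QQ) (hε : 0 < ε) (hx1 : x < 1)
    (hno : ∀ n, aa n ≠ x) : ∃ y ∈ QQ, y ≠ x ∧ |y - x| < ε := by
  set v := min (x + ε) 1 with hv
  have hv1 : x < v := lt_min (by linarith) hx1
  have hv2 : v ≤ 1 := min_le_right _ _
  have hv3 : v ≤ x + ε := min_le_left _ _
  by_cases hgap : ∃ n, (Ioo (aa n) (bb n) ∩ Ioo x v).Nonempty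
  · obtain ⟨n, z, ⟨hz1, hz2⟩, hz3, hz4⟩ := hgap
    have hbx : x < bb n := hz3.trans hz2
    have hxa : x ≤ aa n := by
      by_contra hc
      push_neg at hc
      exact hx.2 (mem_iUnion.2 ⟨n, hc, hbx⟩)
    have hxa' : x < aa n := lt_of_le_of_ne hxa (Ne.symm (hno n))
    refine ⟨aa n, aa_mem n, hxa'.ne', ?_⟩
    rw [abs_of_pos (by linarith)]
    have : aa n < v := hz1.trans hz4
    linarith
  · push_neg at hgap
    refine ⟨(x + v)/2, ⟨⟨?_, ?_⟩, ?_⟩, ?_, ?_⟩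
    · have := hx.1.1; linarith
    · linarith
    · intro hc
      rcases mem_iUnion.1 hc with ⟨n, hn⟩
      have hne := hgap n
      rw [Set.eq_empty_iff_forall_notMem] at hne
      exact hne _ ⟨hn, by constructor <;> [linarith; linarith]⟩
    · intro hc
      have : x < (x + v) / 2 := by linarith
      rw [hc] at this; linarith
    · rw [abs_of_pos (by linarith)]; linarith

lemma side_left {x ε : ℝ} (hx : x ∈ QQ) (hε : 0 < ε) (hx1 : -1 < x)
    (hno : ∀ n, bb n ≠ x) : ∃ y ∈ QQ, y ≠ x ∧ |y - x| < ε := by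
  set v := max (x - ε) (-1 : ℝ) with hv
  have hv1 : v < x := max_lt (by linarith) hx1
  have hv2 : -1 ≤ v := le_max_right _ _
  have hv3 : x - ε ≤ v := le_max_left _ _
  by_cases hgap : ∃ n, (Ioo (aa n) (bb n) ∩ Ioo v x).Nonempty
  · obtain ⟨n, z, ⟨hz1, hz2⟩, hz3, hz4⟩ := hgap
    have hbx : aa n < x := hz1.trans hz4
    have hxa : bb n ≤ x := by
      by_contra hc
      push_neg at hc
      exact hx.2 (mem_iUnion.2 ⟨n, hbx, hc⟩)
    have hxa' : bb n < x := lt_of_le_of_ne hxa (hno n)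
    refine ⟨bb n, bb_mem n, hxa'.ne, ?_⟩
    rw [abs_of_neg (by linarith)]
    have : v < bb n := hz3.trans hz2
    linarith
  · push_neg at hgap
    refine ⟨(v + x)/2, ⟨⟨?_, ?_⟩, ?_⟩, ?_, ?_⟩
    · linarith
    · have := hx.1.2; linarith
    · intro hc
      rcases mem_iUnion.1 hc with ⟨n, hn⟩
      have hne := hgap n
      rw [Set.eq_empty_iff_forall_notMem] at hne
      exact hne _ ⟨hn, by constructor <;> [linarith; linarith]⟩
    · intro hc
      have : (v + x) / 2 < x := by linarith
      rw [hc] at this; linarith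
    · rw [abs_of_neg (by linarith)]; linarith

lemma exists_near {x : ℝ} (hx : x ∈ QQ) {ε : ℝ} (hε : 0 < ε) :
    ∃ y ∈ QQ, y ≠ x ∧ |y - x| < ε := by
  rcases lt_or_eq_of_le hx.1.2 with hlt | heq
  · by_cases hA : ∃ n, aa n = x
    · obtain ⟨n, hn⟩ := hA
      apply side_left hx hε (hn ▸ aa_gt n)
      intro m hm
      have hene : bb m = aa n := hm.trans hn.symm
      rcases eq_or_ne m n with rfl | hmn
      · have := aa_lt_bb m; linarith
      · have he : e m ≠ e n := fun hc => hmn (e_inj hc)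
        rcases he.lt_or_gt with h | h
        · have := sep h
          have := mul_pos lam_pos (show (0:ℝ) < e n - e m by linarith)
          have := aa_lt_bb m
          linarith
        · have := sep h
          have := mul_pos lam_pos (show (0:ℝ) < e m - e n by linarith)
          have := aa_lt_bb n
          have := aa_lt_bb m
          linarith
    · push_neg at hA
      exact side_right hx hε hlt hA
  · apply side_left hx hε (by linarith [hx.1.1, heq] : (-1:ℝ) < x)
    intro m
    have := bb_lt m
    rw [heq]
    exact this.ne

lemma QQ_perfect : Perfect QQ := by
  constructor
  · exact QQ_closed
  · intro x hx
    rw [accPt_iff_nhds]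
    intro U hU
    rcases Metric.mem_nhds_iff.1 hU with ⟨ε, hε, hball⟩
    obtain ⟨y, hyQ, hyx, hyε⟩ := exists_near hx hε
    exact ⟨y, ⟨hball (by rwa [Metric.mem_ball, Real.dist_eq]), hyQ⟩, hyx⟩

lemma tail_small {ε : ℝ} (hε : 0 < ε) : ∃ N : ℕ, (∑' m, if N ≤ m then l m else 0) ≤ ε := by
  have htend := summable_l.hasSum.tendsto_sum_nat
  rw [Metric.tendsto_atTop] at htend
  obtain ⟨N, hN⟩ := htend ε hε
  have hNN := hN N le_rfl
  rw [Real.dist_eq] at hNN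
  refine ⟨N, ?_⟩
  have hsplit := Summable.sum_add_tsum_nat_add (f := l) N summable_l
  have heq : (∑' m, if N ≤ m then l m else 0) = ∑' i, l (i + N) := by
    have h2 := Summable.sum_add_tsum_nat_add (f := fun m => if N ≤ m then l m else 0) N (summable_ite _)
    have h3 : (∑ i ∈ Finset.range N, if N ≤ i then l i else 0) = 0 := by
      apply Finset.sum_eq_zero
      intro i hi
      rw [if_neg (by simpa using Finset.mem_range.1 hi)]
    have h4 : (∑' i, if N ≤ i + N then l (i + N) else 0) = ∑' i, l (i + N) := by
      apply tsum_congr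
      intro i
      rw [if_pos (by omega)]
    rw [h3, h4, zero_add] at h2
    exact h2.symm
  rw [heq]
  have : (∑' i, l (i + N)) = S - ∑ i ∈ Finset.range N, l i := by
    unfold S; linarith [hsplit]
  rw [this]
  have habs := abs_lt.1 hNN
  unfold S
  linarith [habs.1]

lemma avoid_finite (N : ℕ) (s : ℝ) : ∃ δ > (0:ℝ), ∀ m < N, e m ≠ s → δ ≤ |e m - s| := by
  induction N with
  | zero => exact ⟨1, one_pos, fun m hm => absurd hm (by omega)⟩
  | succ N ih =>
    obtain ⟨δ, hδ, hold⟩ := ih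
    by_cases hN : e N = s
    · refine ⟨δ, hδ, fun m hm hne => ?_⟩
      rcases Nat.lt_succ_iff_lt_or_eq.1 hm with h | rfl
      · exact hold m h hne
      · exact absurd hN hne
    · refine ⟨min δ |e N - s|, lt_min hδ (abs_pos.2 (sub_ne_zero.2 hN)), fun m hm hne => ?_⟩
      rcases Nat.lt_succ_iff_lt_or_eq.1 hm with h | rfl
      · exact le_trans (min_le_left _ _) (hold m h hne)
      · exact min_le_right _ _

lemma avoid_right {s ε : ℝ} (hs : s < 1) (hε : 0 < ε) :
    ∃ t, s < t ∧ t ≤ 1 ∧ lam * (t - s) ≤ ε ∧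
      (∑' m, if s < e m ∧ e m ≤ t then l m else 0) ≤ ε := by
  obtain ⟨N, hN⟩ := tail_small hε
  obtain ⟨δ, hδ, hav⟩ := avoid_finite N s
  set η := min (δ/2) (ε/lam) with hη
  have hη0 : 0 < η := lt_min (by linarith) (div_pos hε lam_pos)
  set t := min 1 (s + η) with ht
  have ht1 : s < t := lt_min hs (by linarith)
  have ht2 : t ≤ 1 := min_le_left _ _
  have ht3 : t - s ≤ η := by
    have := min_le_right 1 (s + η)
    simp only [ht]
    rcases min_cases 1 (s + η) with ⟨h1, h2⟩ | ⟨h1, h2⟩ <;> rw [h1] <;> linarith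
  refine ⟨t, ht1, ht2, ?_, ?_⟩
  · have : t - s ≤ ε/lam := le_trans ht3 (min_le_right _ _)
    calc lam * (t - s) ≤ lam * (ε/lam) := mul_le_mul_of_nonneg_left this lam_pos.le
    _ = ε := by rw [mul_comm]; exact div_mul_cancel₀ ε (ne_of_gt lam_pos)
  · refine le_trans (le_trans (tsum_ite_mono _ (fun m => N ≤ m) ?_) le_rfl) hN
    intro m ⟨hm1, hm2⟩
    by_contra hc
    push_neg at hc
    have hne : e m ≠ s := fun h => by rw [h] at hm1; exact lt_irrefl _ hm1
    have := hav m hc hne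
    rw [abs_of_pos (by linarith)] at this
    have : e m - s ≤ δ/2 := by
      have h5 : t - s ≤ δ/2 := le_trans ht3 (min_le_left _ _)
      linarith
    linarith

lemma avoid_left {s ε : ℝ} (hs : 0 < s) (hε : 0 < ε) :
    ∃ t, 0 ≤ t ∧ t < s ∧ lam * (s - t) ≤ ε ∧
      (∑' m, if t < e m ∧ e m < s then l m else 0) ≤ ε := by
  obtain ⟨N, hN⟩ := tail_small hε
  obtain ⟨δ, hδ, hav⟩ := avoid_finite N s
  set η := min (δ/2) (ε/lam) with hη
  have hη0 : 0 < η := lt_min (by linarith) (div_pos hε lam_pos)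
  set t := max 0 (s - η) with ht
  have ht1 : t < s := max_lt hs (by linarith)
  have ht2 : 0 ≤ t := le_max_left _ _
  have ht3 : s - t ≤ η := by
    have := le_max_right 0 (s - η)
    linarith
  refine ⟨t, ht2, ht1, ?_, ?_⟩
  · have : s - t ≤ ε/lam := le_trans ht3 (min_le_right _ _)
    calc lam * (s - t) ≤ lam * (ε/lam) := mul_le_mul_of_nonneg_left this lam_pos.le
    _ = ε := by rw [mul_comm]; exact div_mul_cancel₀ ε (ne_of_gt lam_pos)
  · refine le_trans (tsum_ite_mono _ (fun m => N ≤ m) ?_) hN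
    intro m ⟨hm1, hm2⟩
    by_contra hc
    push_neg at hc
    have hne : e m ≠ s := fun h => by rw [h] at hm2; exact lt_irrefl _ hm2
    have := hav m hc hne
    rw [abs_of_neg (by linarith)] at this
    have h5 : s - t ≤ δ/2 := le_trans ht3 (min_le_left _ _)
    linarith

lemma split_le {t' t : ℝ} (h : t' ≤ t) :
    (∑' m, if e m ≤ t then l m else 0) =
      (∑' m, if e m ≤ t' then l m else 0) + (∑' m, if t' < e m ∧ e m ≤ t then l m else 0) := by
  rw [← Summable.tsum_add (summable_ite _) (summable_ite _)]
  apply tsum_congr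
  intro m
  by_cases h1 : e m ≤ t'
  · rw [if_pos (le_trans h1 h), if_pos h1, if_neg (fun hc => absurd h1 (not_le.2 hc.1))]
    ring
  · push_neg at h1
    rw [if_neg h1.not_ge]
    by_cases h2 : e m ≤ t
    · rw [if_pos h2, if_pos ⟨h1, h2⟩]; ring
    · rw [if_neg h2, if_neg (fun hc => h2 hc.2)]; ring

lemma split_lt {t' s : ℝ} (h : t' < s) :
    G s = (∑' m, if e m ≤ t' then l m else 0) + (∑' m, if t' < e m ∧ e m < s then l m else 0) := by
  unfold G
  rw [← Summable.tsum_add (summable_ite _) (summable_ite _)]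
  apply tsum_congr
  intro m
  by_cases h1 : e m ≤ t'
  · rw [if_pos (lt_of_le_of_lt h1 h), if_pos h1, if_neg (fun hc => absurd h1 (not_le.2 hc.1))]
    ring
  · push_neg at h1
    rw [if_neg h1.not_ge]
    by_cases h2 : e m < s
    · rw [if_pos h2, if_pos ⟨h1, h2⟩]; ring
    · rw [if_neg h2, if_neg (fun hc => h2 hc.2)]; ring

lemma le_split (s : ℝ) :
    (∑' m, if e m ≤ s then l m else 0) = G s + (∑' m, if e m = s then l m else 0) := by
  unfold G
  rw [← Summable.tsum_add (summable_ite _) (summable_ite _)]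
  apply tsum_congr
  intro m
  rcases lt_trichotomy (e m) s with h1 | h1 | h1
  · rw [if_pos h1.le, if_pos h1, if_neg h1.ne]; ring
  · rw [if_pos h1.le, if_neg (by rw [h1]; exact lt_irrefl _), if_pos h1]; ring
  · rw [if_neg (not_le.2 h1), if_neg (not_lt.2 h1.le), if_neg h1.ne']; ring

lemma e_dense {α β : ℝ} (hα : 0 ≤ α) (hβ : β ≤ 1) (h : α < β) : ∃ n, α < e n ∧ e n < β := by
  by_cases hhalf : α < 1/2
  · have hβ' : min β (1/2) ≤ 1/2 := min_le_right _ _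
    have hαβ' : α < min β (1/2) := lt_min h hhalf
    obtain ⟨k, hk1, hk2⟩ := r_dense hα hβ' hαβ'
    exact ⟨2 * k, by rw [e_even]; exact hk1, by rw [e_even]; exact lt_of_lt_of_le hk2 (min_le_left _ _)⟩
  · push_neg at hhalf
    have h1 : (0:ℝ) ≤ 1 - β := by linarith
    have h2 : 1 - α ≤ 1/2 := by linarith
    have h3 : 1 - β < 1 - α := by linarith
    obtain ⟨k, hk1, hk2⟩ := r_dense h1 h2 h3
    exact ⟨2 * k + 1, by rw [e_odd]; linarith, by rw [e_odd]; linarith⟩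

lemma FF_unfold (t : ℝ) : FF t = -1 + lam * t + ∑' m, if e m ≤ t then l m else 0 := rfl

lemma nogap {x y : ℝ} (hx : -1 ≤ x) (hy : y ≤ 1) (hxy : x < y) (hsub : Icc x y ⊆ QQ) :
    False := by
  classical
  set T : ℝ → Set ℝ := fun z => {t : ℝ | t ∈ Icc (0:ℝ) 1 ∧ z ≤ FF t} with hT
  have hone : ∀ z, z ≤ 1 → (1:ℝ) ∈ T z := by
    intro z hz
    exact ⟨⟨zero_le_one, le_rfl⟩, by rw [FF_one]; exact hz⟩
  have hbdd : ∀ z, BddBelow (T z) := fun z => ⟨0, fun t ht => ht.1.1⟩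
  have hne : ∀ z, z ≤ 1 → (T z).Nonempty := fun z hz => ⟨1, hone z hz⟩
  set sx := sInf (T x) with hsx
  set sy := sInf (T y) with hsy
  have hx1 : x ≤ 1 := le_trans hxy.le hy
  have hsx0 : 0 ≤ sx := le_csInf (hne x hx1) (fun t ht => ht.1.1)
  have hsy0 : 0 ≤ sy := le_csInf (hne y hy) (fun t ht => ht.1.1)
  have hsx1 : sx ≤ 1 := csInf_le (hbdd x) (hone x hx1)
  have hsy1 : sy ≤ 1 := csInf_le (hbdd y) (hone y hy)
  have hxy' : sx ≤ sy := csInf_le_csInf (hbdd x) (hne y hy)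
    (fun t ht => ⟨ht.1, le_trans hxy.le ht.2⟩)
  -- FZ1 : above sInf, FF ≥ z
  have FZ1 : ∀ z, z ≤ 1 → ∀ t, t ∈ Icc (0:ℝ) 1 → sInf (T z) < t → z ≤ FF t := by
    intro z hz t htI hst
    obtain ⟨t', ht', hlt⟩ := exists_lt_of_csInf_lt (hne z hz) hst
    exact le_trans ht'.2 (FF_mono hlt.le)
  -- FZ2 : below sInf, FF < z
  have FZ2 : ∀ z, ∀ t, t ∈ Icc (0:ℝ) 1 → t < sInf (T z) → FF t < z := by
    intro z t htI hst
    have := notMem_of_lt_csInf hst (hbdd z)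
    rw [hT] at this
    simp only [Set.mem_setOf_eq] at this
    push_neg at this
    exact this htI
  rcases lt_or_eq_of_le hxy' with hlt | heqs
  · -- case sx < sy : find a gap strictly inside (x, y)
    obtain ⟨n, hn1, hn2⟩ := e_dense hsx0 hsy1 hlt
    have hen1 : e n < 1 := e_lt_one n
    have hen0 : 0 < e n := e_pos n
    set t := (sx + e n)/2 with htd
    have htI : t ∈ Icc (0:ℝ) 1 := ⟨by positivity, by
      have : t < e n := by rw [htd]; linarith
      linarith⟩
    have hxa : x ≤ aa n := by
      have h1 : x ≤ FF t := FZ1 x hx1 t htI (by rw [htd]; linarith)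
      exact le_trans h1 (FF_le_aa (by rw [htd]; linarith))
    have hby : bb n < y := by
      rw [bb_eq_FF]
      exact FZ2 y (e n) ⟨hen0.le, hen1.le⟩ hn2
    set z := (aa n + bb n)/2 with hzd
    have hzin : z ∈ Ioo (aa n) (bb n) := by
      constructor <;> [skip; skip] <;> rw [hzd] <;> have := aa_lt_bb n <;> linarith
    have hzQ : z ∈ QQ := hsub ⟨by rw [hzd]; have := aa_lt_bb n; linarith,
      by rw [hzd]; have := aa_lt_bb n; linarith⟩
    exact hzQ.2 (mem_iUnion.2 ⟨n, hzin⟩)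
  · -- case sx = sy =: s
    -- Claim Cx : -1 + lam * s + G s ≤ x
    have Cx : -1 + lam * sx + G sx ≤ x := by
      rcases eq_or_lt_of_le hsx0 with h0 | h0
      · have hG0 : G sx = 0 := by
          unfold G
          have : (fun m => if e m < sx then l m else 0) = fun m => (0:ℝ) := by
            funext m
            rw [if_neg]
            rw [← h0]
            exact not_lt.2 (e_pos m).le
          rw [this, tsum_zero]
        rw [hG0, ← h0]
        simpa using hx
      · apply le_of_forall_pos_le_add
        intro ε hε
        obtain ⟨t, ht0, hts, hlam, hsum⟩ := avoid_left h0 (half_pos hε)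
        have htI : t ∈ Icc (0:ℝ) 1 := ⟨ht0, by linarith⟩
        have hFt : FF t < x := FZ2 x t htI (by rw [← hsx]; exact hts)
        have hGsplit := split_lt hts
        rw [FF_unfold] at hFt
        linarith
    -- Claim Cy : y ≤ -1 + lam * s + G s + A s
    set A := ∑' m, if e m = sx then l m else 0 with hA
    have Cy : y ≤ -1 + lam * sx + G sx + A := by
      rcases eq_or_lt_of_le hsx1 with h1 | h1
      · -- s = 1
        have hG1 : G sx = S := by
          unfold G
          rw [h1]
          apply tsum_congr
          intro m
          rw [if_pos (e_lt_one m)]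
        have hA1 : A = 0 := by
          rw [hA, h1]
          have : (fun m => if e m = (1:ℝ) then l m else 0) = fun m => (0:ℝ) := by
            funext m
            rw [if_neg (e_lt_one m).ne]
          rw [this, tsum_zero]
        rw [hG1, hA1, h1]
        have : -1 + lam * 1 + S + 0 = 1 := by unfold lam; ring
        linarith
      · apply le_of_forall_pos_le_add
        intro ε hε
        obtain ⟨t, hts, ht1, hlam, hsum⟩ := avoid_right h1 (half_pos hε)
        have htI : t ∈ Icc (0:ℝ) 1 := ⟨by linarith, ht1⟩
        have hFt : y ≤ FF t := FZ1 y hy t htI (by rw [← hsy, ← heqs]; exact hts)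
        have h2 := split_le (le_of_lt hts)
        have h3 := le_split sx
        rw [FF_unfold] at hFt
        rw [h2, h3] at hFt
        rw [← hA] at hFt
        linarith
    by_cases hatom : ∃ n, e n = sx
    · obtain ⟨n, hn⟩ := hatom
      have hAl : A = l n := by rw [hA, ← hn]; exact atom_sum n
      have haan : aa n = -1 + lam * sx + G sx := by unfold aa; rw [hn]
      have hbbn : bb n = -1 + lam * sx + G sx + A := by unfold bb; rw [haan, hAl]
      set z := (x + y)/2 with hzd
      have hzQ : z ∈ QQ := hsub ⟨by rw [hzd]; linarith, by rw [hzd]; linarith⟩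
      apply hzQ.2
      apply mem_iUnion.2
      refine ⟨n, ?_, ?_⟩
      · rw [haan, hzd]; linarith
      · rw [hbbn, hzd]; linarith
    · push_neg at hatom
      have hA0 : A = 0 := by
        rw [hA]
        have : (fun m => if e m = sx then l m else 0) = fun m => (0:ℝ) := by
          funext m
          rw [if_neg (hatom m)]
        rw [this, tsum_zero]
      rw [hA0] at Cy
      linarith

lemma QQ_td : IsTotallyDisconnected QQ := by
  intro tset hsub hconn x hx y hy
  by_contra hne
  have key : ∀ p q : ℝ, p ∈ tset → q ∈ tset → p < q → False := by
    intro p q hp hq hpq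
    have hIcc : Icc p q ⊆ QQ := fun w hw => hsub (hconn.Icc_subset hp hq hw)
    have hpQ : p ∈ QQ := hsub hp
    have hqQ : q ∈ QQ := hsub hq
    exact nogap hpQ.1.1 hqQ.1.2 hpq hIcc
  rcases Ne.lt_or_gt hne with h | h
  · exact key x y hx hy h
  · exact key y x hy hx h

end

end Stmt13Aux

/-- There exists a Cantor set `Q ⊆ [-1,1]` containing `0`, obtained by
removing countably many disjoint open intervals `I_k = (a_k, b_k)`, such that each
gap has length at most the square of its distance from `0`:
`|I_k| ≤ (d(0, x_k))²` where `x_k` is the midpoint of `I_k`. -/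
theorem stmt13 : ∃ (Q : Set ℝ) (a b : ℕ → ℝ),
    Q ⊆ Set.Icc (-1 : ℝ) 1 ∧ (0 : ℝ) ∈ Q ∧
    IsCompact Q ∧ Perfect Q ∧ IsTotallyDisconnected Q ∧
    (∀ k, a k < b k) ∧
    (Pairwise fun i j => Disjoint (Set.Ioo (a i) (b i)) (Set.Ioo (a j) (b j))) ∧
    Q = Set.Icc (-1 : ℝ) 1 \ ⋃ k, Set.Ioo (a k) (b k) ∧
    (∀ k, b k - a k ≤ (dist (0 : ℝ) ((a k + b k) / 2)) ^ 2) := by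
  exact ⟨Stmt13Aux.QQ, Stmt13Aux.aa, Stmt13Aux.bb, Set.diff_subset, Stmt13Aux.zero_mem,
    isCompact_Icc.of_isClosed_subset Stmt13Aux.QQ_closed Set.diff_subset,
    Stmt13Aux.QQ_perfect, Stmt13Aux.QQ_td, Stmt13Aux.aa_lt_bb, Stmt13Aux.gaps_disjoint, rfl,
    Stmt13Aux.gap_bound⟩
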